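/- Let C and C_OPT be points in ℝ^d with d = dist(C, C_OPT) ≤ 2, and let P be a point with dist(C_OPT, P) = 1 such that the angle ∠C C_OPT P is at least π/2 (i.e., ⟨C - C_OPT, P - C_OPT⟩ ≤ 0). Then dist(C, P) ≥ 1 + d²/4. -/

import Mathlib

theorem far_point_dist (d : ℕ) (C COPT P : EuclideanSpace ℝ (Fin d))
    (hd : dist C COPT ≤ 2) (hP : dist COPT P = 1)
    (hangle : (inner ℝ (C - COPT) (P - COPT) : ℝ) ≤ 0) :
    dist C P ≥ 1 + (dist C COPT) ^ 2 / 4 := by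
  have h1 : (dist C P)^2 = (dist C COPT)^2 + (dist COPT P)^2
      - 2 * (inner ℝ (C - COPT) (P - COPT) : ℝ) := by
    rw [dist_eq_norm, dist_eq_norm, dist_eq_norm]
    have h : C - P = (C - COPT) - (P - COPT) := by abel
    rw [h, @norm_sub_sq_real, norm_sub_rev COPT P]
    ring
  have h0 : dist C P ≥ 0 := dist_nonneg
  have h2 : dist C COPT ≥ 0 := dist_nonneg
  nlinarith [sq_nonneg (dist C COPT), sq_nonneg (dist C P - 1 - (dist C COPT)^2/4),
    mul_nonneg (mul_nonneg h2 h2) (by linarith : (0:ℝ) ≤ 2 - dist C COPT),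
    mul_nonneg (mul_nonneg h2 h2) (mul_nonneg h2 (by linarith : (0:ℝ) ≤ 2 - dist C COPT))]
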